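/- Let r ≥ 1 and let t be a tree over a ranked alphabet extended by parameter symbols (parameters label leaves only and are not counted in the size |t|), such that |t| ≥ 2 and every node of t has at most r children. Then there exists a node v of t such that |t|/(2(r+2)) ≤ |t[v]| ≤ ((r+1)/(r+2))·|t|, where t[v] denotes the subtree of t rooted at v and |t[v]| counts its non-parameter nodes. -/

import Mathlib

universe u v

/-- Finite rooted ordered labelled trees. -/
inductive RTree (L : Type u) : Type u
  | node : L → List (RTree L) → RTree L

namespace RTree

/-- The number of nodes of a tree. -/
def size {L : Type u} : RTree L → ℕ
  | .node _ ts => 1 + (ts.attach.map (fun x => x.1.size)).sum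
termination_by t => sizeOf t
decreasing_by simp_wf; have := List.sizeOf_lt_of_mem x.2; omega

/-- The list of labels of the nodes of a tree. -/
def labelsList {L : Type u} : RTree L → List L
  | .node f ts => f :: (ts.attach.map (fun x => x.1.labelsList)).flatten
termination_by t => sizeOf t
decreasing_by simp_wf; have := List.sizeOf_lt_of_mem x.2; omega

/-- The depth of a tree: the maximal number of edges on a path from the root
to a leaf. -/
def depth {L : Type u} : RTree L → ℕ
  | .node _ ts => (ts.attach.map (fun x => x.1.depth + 1)).foldr max 0
termination_by t => sizeOf t
decreasing_by simp_wf; have := List.sizeOf_lt_of_mem x.2; omega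

/-- `Subtree s t` holds iff `s` is the subtree of `t` rooted at some node
of `t`. -/
inductive Subtree {L : Type u} : RTree L → RTree L → Prop
  | refl (t : RTree L) : Subtree t t
  | child {s t : RTree L} {f : L} {ts : List (RTree L)} :
      t ∈ ts → Subtree s t → Subtree s (.node f ts)

/-- A tree is well-formed over a ranked alphabet if every node labelled by a
symbol of rank `k` has exactly `k` children. -/
inductive WF {L : Type u} (rk : L → ℕ) : RTree L → Prop
  | node {f : L} {ts : List (RTree L)} :
      ts.length = rk f → (∀ t ∈ ts, WF rk t) → WF rk (.node f ts)

end RTree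

namespace RTree

/-- Number of non-parameter nodes of a tree whose leaves may be labelled with
parameters (the right summand `ℕ` is the set of parameter symbols). -/
def psize {L : Type u} : RTree (L ⊕ ℕ) → ℕ
  | .node (Sum.inl _) ts => 1 + (ts.attach.map (fun x => x.1.psize)).sum
  | .node (Sum.inr _) ts => (ts.attach.map (fun x => x.1.psize)).sum
termination_by t => sizeOf t
decreasing_by all_goals (simp_wf; have := List.sizeOf_lt_of_mem x.2; omega)

lemma psize_node_inl {L : Type u} (f : L) (ts : List (RTree (L ⊕ ℕ))) :
    (RTree.node (Sum.inl f) ts).psize = 1 + (ts.map psize).sum := by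
  simp [psize, List.attach_map_val]

lemma psize_node_inr {L : Type u} (p : ℕ) (ts : List (RTree (L ⊕ ℕ))) :
    (RTree.node (Sum.inr p : L ⊕ ℕ) ts).psize = (ts.map psize).sum := by
  simp [psize, List.attach_map_val]

lemma psize_node_le {L : Type u} (l : L ⊕ ℕ) (ts : List (RTree (L ⊕ ℕ))) :
    (RTree.node l ts).psize ≤ 1 + (ts.map psize).sum ∧
    (ts.map psize).sum ≤ (RTree.node l ts).psize := by
  rcases l with f | p
  · rw [psize_node_inl]; omega
  · rw [psize_node_inr]; omega

lemma mem_labelsList_of_child {L : Type u} {f : L} {ts : List (RTree L)}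
    {c : RTree L} (hc : c ∈ ts) {x : L} (hx : x ∈ c.labelsList) :
    x ∈ (RTree.node f ts).labelsList := by
  rw [labelsList]
  simp only [List.mem_cons, List.mem_flatten, List.mem_map]
  right
  exact ⟨c.labelsList, ⟨⟨c, hc⟩, List.mem_attach _ _, rfl⟩, hx⟩

lemma exists_max_psize {L : Type u} (ts : List (RTree (L ⊕ ℕ))) (h : ts ≠ []) :
    ∃ m ∈ ts, ∀ c ∈ ts, c.psize ≤ m.psize := by
  induction ts with
  | nil => exact absurd rfl h
  | cons a l ih =>
    rcases eq_or_ne l [] with rfl | hl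
    · exact ⟨a, by simp, by simp⟩
    · obtain ⟨m, hm, hmax⟩ := ih hl
      rcases le_total a.psize m.psize with h1 | h1
      · refine ⟨m, List.mem_cons_of_mem _ hm, ?_⟩
        intro c hc
        rcases List.mem_cons.1 hc with rfl | hc
        · exact h1
        · exact hmax c hc
      · refine ⟨a, List.mem_cons_self, ?_⟩
        intro c hc
        rcases List.mem_cons.1 hc with rfl | hc
        · exact le_rfl
        · exact (hmax c hc).trans h1

/-- Key descent lemma, by strong induction on `sizeOf`. -/
theorem key (L : Type u) (rkL : L → ℕ) (r : ℕ) (hr : 1 ≤ r) (n : ℕ) (hn : 2 ≤ n) :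
    ∀ (N : ℕ) (u : RTree (L ⊕ ℕ)), sizeOf u ≤ N →
    u.WF (fun l => match l with | Sum.inl f => rkL f | Sum.inr _ => 0) →
    (∀ l ∈ u.labelsList,
      (match l with | Sum.inl f => rkL f | Sum.inr _ => 0) ≤ r) →
    ((r : ℝ) + 1) / ((r : ℝ) + 2) * (n : ℝ) < (u.psize : ℝ) →
    ∃ s : RTree (L ⊕ ℕ), s.Subtree u ∧
      (n : ℝ) / (2 * (r + 2)) ≤ (s.psize : ℝ) ∧
      (s.psize : ℝ) ≤ ((r : ℝ) + 1) / ((r : ℝ) + 2) * (n : ℝ) := by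
  intro N
  induction N using Nat.strong_induction_on with
  | _ N ih =>
  intro u hN hwf hrank hbig
  obtain ⟨l, ts⟩ := u
  by_cases hch : ∃ c ∈ ts, ((r : ℝ) + 1) / ((r : ℝ) + 2) * (n : ℝ) < (c.psize : ℝ)
  · obtain ⟨c, hc, hcbig⟩ := hch
    obtain ⟨hlen, hall⟩ := hwf
    have hlt : sizeOf c < N := by
      have h1 := List.sizeOf_lt_of_mem hc
      have h2 : sizeOf (RTree.node l ts) = 1 + sizeOf l + sizeOf ts := by simp
      omega
    obtain ⟨s, hs, h1, h2⟩ := ih (sizeOf c) hlt c le_rfl (hall c hc)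
      (fun x hx => hrank x (mem_labelsList_of_child hc hx)) hcbig
    exact ⟨s, Subtree.child hc hs, h1, h2⟩
  · push_neg at hch
    have hrpos : (0:ℝ) < (r : ℝ) + 2 := by positivity
    have h2n : (2:ℝ) ≤ (n:ℝ) := by exact_mod_cast hn
    have hr1 : (1:ℝ) ≤ (r:ℝ) := by exact_mod_cast hr
    obtain ⟨hub, hlb⟩ := psize_node_le l ts
    -- the tree has psize ≥ 2
    have hB1 : (1:ℝ) < ((r : ℝ) + 1) / ((r : ℝ) + 2) * (n : ℝ) := by
      rw [div_mul_eq_mul_div, lt_div_iff₀ hrpos]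
      nlinarith
    have hu2 : 2 ≤ (RTree.node l ts).psize := by
      by_contra h
      have : ((RTree.node l ts).psize : ℝ) ≤ 1 := by
        have : (RTree.node l ts).psize ≤ 1 := by omega
        exact_mod_cast this
      linarith
    have hsumpos : 1 ≤ (ts.map psize).sum := by omega
    have hne : ts ≠ [] := by rintro rfl; simp at hsumpos
    obtain ⟨m, hm, hmax⟩ := exists_max_psize ts hne
    refine ⟨m, Subtree.child hm (Subtree.refl m), ?_, hch m hm⟩
    have hlenr : ts.length ≤ r := by
      obtain ⟨hlen, -⟩ := hwf
      have := hrank l (by rw [labelsList]; exact List.mem_cons_self)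
      rcases l with f | p
      · simp only at hlen this ⊢; omega
      · simp only at hlen; omega
    have hsumle : (ts.map psize).sum ≤ ts.length * m.psize := by
      have h := List.sum_le_card_nsmul (ts.map psize) m.psize ?_
      · simpa [smul_eq_mul] using h
      · intro x hx
        obtain ⟨c, hc, rfl⟩ := List.mem_map.1 hx
        exact hmax c hc
    have hkey : (RTree.node l ts).psize ≤ 1 + r * m.psize := by
      have := Nat.mul_le_mul_right m.psize hlenr
      omega
    have hkeyR : ((RTree.node l ts).psize : ℝ) ≤ 1 + (r:ℝ) * (m.psize : ℝ) := by
      exact_mod_cast hkey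
    have hB : ((r : ℝ) + 1) / ((r : ℝ) + 2) * (n : ℝ) < 1 + (r:ℝ) * (m.psize : ℝ) :=
      lt_of_lt_of_le hbig hkeyR
    rw [div_mul_eq_mul_div] at hB
    rw [div_le_iff₀ (by positivity)]
    rw [div_lt_iff₀ hrpos] at hB
    nlinarith [Nat.cast_nonneg (α := ℝ) m.psize, mul_le_mul_of_nonneg_left h2n (le_of_lt hrpos)]

end RTree

/-- the splitting lemma.  Let `t` be a tree over a ranked
alphabet extended by parameter symbols (parameters have rank `0`, so they
label leaves only, and they are not counted in the size `psize`), such that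
every symbol occurring in `t` has rank at most `r` (so every node of `t` has
at most `r` children) and `|t| ≥ 2`.  Then some subtree `t[v]` of `t`
satisfies `|t|/(2(r+2)) ≤ |t[v]| ≤ ((r+1)/(r+2))·|t|`. -/
theorem exists_balanced_split (L : Type) (rkL : L → ℕ) (r : ℕ) (hr : 1 ≤ r)
    (t : RTree (L ⊕ ℕ))
    (hwf : t.WF (fun l => match l with | Sum.inl f => rkL f | Sum.inr _ => 0))
    (hrank : ∀ l ∈ t.labelsList,
      (match l with | Sum.inl f => rkL f | Sum.inr _ => 0) ≤ r)
    (hsize : 2 ≤ t.psize) :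
    ∃ s : RTree (L ⊕ ℕ), s.Subtree t ∧
      (t.psize : ℝ) / (2 * (r + 2)) ≤ (s.psize : ℝ) ∧
      (s.psize : ℝ) ≤ ((r : ℝ) + 1) / ((r : ℝ) + 2) * (t.psize : ℝ) := by
  have hbig : ((r : ℝ) + 1) / ((r : ℝ) + 2) * (t.psize : ℝ) < (t.psize : ℝ) := by
    have hp : (0:ℝ) < (t.psize : ℝ) := by
      have : (2:ℝ) ≤ (t.psize:ℝ) := by exact_mod_cast hsize
      linarith
    have h1 : ((r : ℝ) + 1) / ((r : ℝ) + 2) < 1 := by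
      rw [div_lt_one (by positivity)]; linarith
    nlinarith
  exact RTree.key L rkL r hr t.psize hsize (sizeOf t) t le_rfl hwf hrank hbig
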